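/- arXiv:0803.2091 — 2 statements merged into one kernel-verified Lean document; each statement's English description precedes it below -/
import Mathlib

section
/- Let α be a full dual vector of a finite game. If a pure strategy profile c ∈ C has probability zero in all correlated equilibria, then σ(c) := ∏_{i∈N} σ_i(c_i) = 0 for every σ = (σ_i)_{i∈N} ∈ ∏_i C_i/α_i. Moreover, if a pure strategy c_i of player i has marginal probability zero in all correlated equilibria, then σ_i(c_i) = 0 for every σ_i ∈ C_i/α_i. -/
open scoped BigOperators

section Prelim

variable {S : Type} [Fintype S] [DecidableEq S]

/-- `σ` is a mixed strategy (probability distribution) on the finite set `S`. -/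
def IsMixed (σ : S → ℝ) : Prop := (∀ s, 0 ≤ σ s) ∧ ∑ s, σ s = 1

/-- The Dirac measure `δ_s`. -/
def dirac (s : S) : S → ℝ := fun d => if d = s then 1 else 0

/-- `α_i * σ_i`, the image of the mixed strategy `σ` under the deviation plan `αᵢ`,
where `αᵢ c d` is the probability `αᵢ(d | c)`. -/
def devImage (αᵢ : S → S → ℝ) (σ : S → ℝ) : S → ℝ := fun d => ∑ c, σ c * αᵢ c d

/-- `σ` is `αᵢ`-stationary: `αᵢ * σ = σ`. -/
def IsDevStationary (αᵢ : S → S → ℝ) (σ : S → ℝ) : Prop := devImage αᵢ σ = σ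

/-- A nonempty `B ⊆ S` is `αᵢ`-absorbing if `supp (αᵢ * c) ⊆ B` for all `c ∈ B`. -/
def IsAbsorbing (αᵢ : S → S → ℝ) (B : Finset S) : Prop :=
  B.Nonempty ∧ ∀ c ∈ B, ∀ d, 0 < αᵢ c d → d ∈ B

/-- A minimal absorbing set: an absorbing set containing no proper nonempty absorbing subset. -/
def IsMinimalAbsorbing (αᵢ : S → S → ℝ) (B : Finset S) : Prop :=
  IsAbsorbing αᵢ B ∧ ∀ B' ⊆ B, IsAbsorbing αᵢ B' → B' = B

/-- `C_i/α_i`: the set of `αᵢ`-stationary mixed strategies whose support is contained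
in some minimal `αᵢ`-absorbing set. -/
def ReducedSet (αᵢ : S → S → ℝ) : Set (S → ℝ) :=
  {σ | IsMixed σ ∧ IsDevStationary αᵢ σ ∧
    ∃ B : Finset S, IsMinimalAbsorbing αᵢ B ∧ ∀ s, σ s ≠ 0 → s ∈ B}

end Prelim

section Games

variable {N : Type} [Fintype N] [DecidableEq N]
  {C : N → Type} [∀ i, Fintype (C i)] [∀ i, DecidableEq (C i)]

/-- Marginal probability of the pure strategy `cᵢ` of player `i` under `μ`. -/
def marginal (μ : (∀ j, C j) → ℝ) (i : N) (cᵢ : C i) : ℝ :=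
  ∑ c : ∀ j, C j, if c i = cᵢ then μ c else 0

/-- The incentive sum `∑_{c_{-i}} μ(c_{-i},cᵢ)[U_i(c_{-i},dᵢ) − U_i(c_{-i},cᵢ)]`. -/
def incentiveSum (U : ∀ i : N, (∀ j, C j) → ℝ) (μ : (∀ j, C j) → ℝ) (i : N) (cᵢ dᵢ : C i) : ℝ :=
  ∑ c : ∀ j, C j, if c i = cᵢ then μ c * (U i (Function.update c i dᵢ) - U i c) else 0

/-- Correlated equilibrium. -/
def IsCorrelatedEq (U : ∀ i : N, (∀ j, C j) → ℝ) (μ : (∀ j, C j) → ℝ) : Prop :=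
  (∀ c, 0 ≤ μ c) ∧ (∑ c : ∀ j, C j, μ c) = 1 ∧
    ∀ (i : N) (cᵢ dᵢ : C i), incentiveSum U μ i cᵢ dᵢ ≤ 0

/-- Multilinear extension: payoff of player `i` under the mixed strategy profile `σ`. -/
def mixedPayoff (U : ∀ i : N, (∀ j, C j) → ℝ) (σ : ∀ j, C j → ℝ) (i : N) : ℝ :=
  ∑ c : ∀ j, C j, (∏ j, σ j (c j)) * U i c

/-- Nash equilibrium. -/
def IsNash (U : ∀ i : N, (∀ j, C j) → ℝ) (σ : ∀ j, C j → ℝ) : Prop :=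
  (∀ i, IsMixed (σ i)) ∧
  ∀ (i : N) (dᵢ : C i),
    mixedPayoff U (Function.update σ i (dirac dᵢ)) i ≤ mixedPayoff U σ i

/-- `D(c, α) = ∑_i [U_i(c_{-i}, α_i * c_i) − U_i(c)]`. -/
def devGain (U : ∀ i : N, (∀ j, C j) → ℝ) (α : ∀ i, C i → C i → ℝ) (c : ∀ j, C j) : ℝ :=
  ∑ i, ((∑ dᵢ, α i (c i) dᵢ * U i (Function.update c i dᵢ)) - U i c)

/-- A dual vector: a profile of deviation plans with `D(c,α) ≥ 0` for all `c`. -/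
def IsDualVector (U : ∀ i : N, (∀ j, C j) → ℝ) (α : ∀ i, C i → C i → ℝ) : Prop :=
  (∀ (i : N) (cᵢ : C i), IsMixed (α i cᵢ)) ∧ ∀ c, 0 ≤ devGain U α c

/-- A strong dual vector: `D(c,α) > 0` whenever `c` has probability zero in all
correlated equilibria. -/
def IsStrong (U : ∀ i : N, (∀ j, C j) → ℝ) (α : ∀ i, C i → C i → ℝ) : Prop :=
  ∀ c : ∀ j, C j, (∀ μ, IsCorrelatedEq U μ → μ c = 0) → 0 < devGain U α c

/-- A full dual vector: `α_i(dᵢ|cᵢ) > 0` whenever `β_i(dᵢ|cᵢ) > 0` for some dual vector `β`. -/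
def IsFull (U : ∀ i : N, (∀ j, C j) → ℝ) (α : ∀ i, C i → C i → ℝ) : Prop :=
  ∀ (i : N) (cᵢ dᵢ : C i),
    (∃ β : ∀ i, C i → C i → ℝ, IsDualVector U β ∧ 0 < β i cᵢ dᵢ) → 0 < α i cᵢ dᵢ

end Games


section Farkas
variable {m : Type} [Fintype m] [DecidableEq m]

variable {κ : Type} [Fintype κ] [DecidableEq κ]

def coneSet (v : κ → (m → ℝ)) : Set (m → ℝ) :=
  {x | ∃ w : κ → ℝ, (∀ k, 0 ≤ w k) ∧ ∑ k, w k • v k = x}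

lemma cara_aux (v : κ → (m → ℝ)) : ∀ (k : ℕ) (w : κ → ℝ), (∀ i, 0 ≤ w i) →
    ({i | w i ≠ 0} : Finset κ).card ≤ k →
    ∃ T : Finset κ, LinearIndependent ℝ (fun i : T => v i) ∧
      ∃ z : κ → ℝ, (∀ i, 0 ≤ z i) ∧ (∀ i ∉ T, z i = 0) ∧ ∑ i, z i • v i = ∑ i, w i • v i := by
  intro k
  induction k with
  | zero =>
    intro w hw hcard
    refine ⟨∅, linearIndependent_empty_type, fun _ => 0, fun _ => le_refl _, fun _ _ => rfl, ?_⟩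
    have hz : ∀ i, w i = 0 := by
      intro i
      by_contra hne
      have : i ∈ ({i | w i ≠ 0} : Finset κ) := by simp [hne]
      simp [Nat.le_zero, Finset.card_eq_zero] at hcard
      exact hne (@hcard i)
    simp [hz]
  | succ k ih =>
    intro w hw hcard
    set S : Finset κ := {i | w i ≠ 0} with hS
    by_cases hli : LinearIndependent ℝ (fun i : S => v i)
    · refine ⟨S, hli, w, hw, fun i hi => ?_, rfl⟩
      by_contra hne
      exact hi (by simp [hS, hne])
    · obtain ⟨g, hgsum, i₀, hgi₀⟩ := Fintype.not_linearIndependent_iff.mp hli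
      set s : ℝ := if 0 < g i₀ then 1 else -1 with hs
      set c : κ → ℝ := fun i => if h : i ∈ S then s * g ⟨i, h⟩ else 0 with hc
      have hcS : ∀ i ∉ S, c i = 0 := fun i hi => by simp [hc, hi]
      have hci₀ : 0 < c (i₀ : κ) := by
        have : c (i₀ : κ) = s * g i₀ := by simp [hc, i₀.2]
        rw [this, hs]
        rcases lt_trichotomy (g i₀) 0 with h | h | h
        · simp [not_lt.mpr h.le]; nlinarith
        · exact absurd h hgi₀
        · simp [h]
      have hcsum : ∑ i, c i • v i = 0 := by
        have h1 : ∑ i, c i • v i = ∑ i ∈ S, c i • v i := by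
          refine (Finset.sum_subset (Finset.subset_univ S) ?_).symm
          intro i _ hi; rw [hcS i hi, zero_smul]
        have h2 : ∑ i ∈ S, c i • v i = ∑ i : S, c (i : κ) • v (i : κ) :=
          (Finset.sum_coe_sort S _).symm
        have h3 : ∀ i : S, c (i : κ) • v (i : κ) = s • (g i • v (i : κ)) := by
          intro i
          have : c (i : κ) = s * g i := by simp [hc, i.2]
          rw [this, smul_smul]
        rw [h1, h2, Finset.sum_congr rfl (fun i _ => h3 i), ← Finset.smul_sum, hgsum, smul_zero]
      set P : Finset κ := S.filter (fun i => 0 < c i) with hP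
      have hi₀P : (i₀ : κ) ∈ P := by
        rw [hP, Finset.mem_filter]
        exact ⟨i₀.2, hci₀⟩
      obtain ⟨j₀, hj₀P, hmin⟩ := Finset.exists_min_image P (fun i => w i / c i) ⟨_, hi₀P⟩
      rw [hP, Finset.mem_filter] at hj₀P
      obtain ⟨hj₀S, hcj₀⟩ := hj₀P
      have hwj₀ : 0 < w j₀ := by
        have := hw j₀
        have hne : w j₀ ≠ 0 := by simpa [hS] using hj₀S
        exact lt_of_le_of_ne this (Ne.symm hne)
      set t : ℝ := w j₀ / c j₀ with ht
      have htpos : 0 ≤ t := le_of_lt (div_pos hwj₀ hcj₀)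
      set w' : κ → ℝ := fun i => w i - t * c i with hw'def
      have hw' : ∀ i, 0 ≤ w' i := by
        intro i
        by_cases hci : 0 < c i
        · have hiS : i ∈ S := by
            by_contra hiS
            rw [hcS i hiS] at hci; exact lt_irrefl 0 hci
          have hiP : i ∈ P := by rw [hP, Finset.mem_filter]; exact ⟨hiS, hci⟩
          have := hmin i hiP
          have : t * c i ≤ w i := by
            rw [← le_div_iff₀ hci]; exact this
          simp [hw'def]; linarith
        · have : t * c i ≤ 0 := mul_nonpos_of_nonneg_of_nonpos htpos (not_lt.mp hci)
          have := hw i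
          simp [hw'def]; linarith
      have hsum : ∑ i, w' i • v i = ∑ i, w i • v i := by
        simp only [hw'def, sub_smul, Finset.sum_sub_distrib]
        have : ∑ i, (t * c i) • v i = t • ∑ i, c i • v i := by
          rw [Finset.smul_sum]; exact Finset.sum_congr rfl (fun i _ => by rw [smul_smul])
        rw [this, hcsum, smul_zero, sub_zero]
      have hsupp : ({i | w' i ≠ 0} : Finset κ) ⊆ S.erase j₀ := by
        intro i hi
        simp only [Finset.mem_filter, Finset.mem_univ, true_and] at hi
        rcases eq_or_ne i j₀ with rfl | hij
        · exfalso
          apply hi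
          simp [hw'def, ht, div_mul_cancel₀ _ (ne_of_gt hcj₀)]
        · refine Finset.mem_erase.mpr ⟨hij, ?_⟩
          by_contra hiS
          apply hi
          have hwi : w i = 0 := by
            by_contra h
            exact hiS (by simp [hS, h])
          simp [hw'def, hcS i hiS, hwi]
      have hcard' : ({i | w' i ≠ 0} : Finset κ).card ≤ k := by
        have h1 := Finset.card_le_card hsupp
        have h2 : (S.erase j₀).card = S.card - 1 := Finset.card_erase_of_mem hj₀S
        omega
      obtain ⟨T, hT, z, hz0, hzT, hzsum⟩ := ih w' hw' hcard'
      exact ⟨T, hT, z, hz0, hzT, hzsum.trans hsum⟩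

set_option linter.unusedSectionVars false

def coneMap (v : κ → (m → ℝ)) (T : Finset κ) : (T → ℝ) →ₗ[ℝ] (m → ℝ) where
  toFun y := ∑ i : T, y i • v i
  map_add' a b := by simp [add_smul, Finset.sum_add_distrib]
  map_smul' c a := by simp [smul_smul, Finset.smul_sum]

lemma isClosed_coneSet (v : κ → (m → ℝ)) : IsClosed (coneSet v) := by
  classical
  have hD : coneSet v =
      ⋃ (T : Finset κ), ⋃ (_ : LinearIndependent ℝ (fun i : T => v i)),
        (coneMap v T '' {y : T → ℝ | ∀ i, 0 ≤ y i}) := by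
    ext x
    simp only [Set.mem_iUnion, Set.mem_image]
    constructor
    · rintro ⟨w, hw, hsum⟩
      obtain ⟨T, hT, z, hz0, hzT, hzsum⟩ := cara_aux v _ w hw (le_refl _)
      refine ⟨T, hT, fun i => z i, fun i => hz0 i, ?_⟩
      show ∑ i : T, z (i : κ) • v (i : κ) = x
      rw [Finset.sum_coe_sort T (fun i => z i • v i)]
      calc ∑ i ∈ T, z i • v i = ∑ i : κ, z i • v i :=
            Finset.sum_subset (Finset.subset_univ T) (fun i _ hi => by rw [hzT i hi, zero_smul])
        _ = ∑ i : κ, w i • v i := hzsum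
        _ = x := hsum
    · rintro ⟨T, hT, y, hy, hsum⟩
      refine ⟨fun i => if h : i ∈ T then y ⟨i, h⟩ else 0, fun i => ?_, ?_⟩
      · by_cases h : i ∈ T
        · simpa [h] using hy ⟨i, h⟩
        · simp [h]
      · rw [← hsum]
        show ∑ i : κ, (if h : i ∈ T then y ⟨i, h⟩ else 0) • v i = ∑ i : T, y i • v i
        calc ∑ i : κ, (if h : i ∈ T then y ⟨i, h⟩ else 0) • v i
            = ∑ i ∈ T, (if h : i ∈ T then y ⟨i, h⟩ else 0) • v i :=
              (Finset.sum_subset (Finset.subset_univ T) (fun i _ hi => by simp [hi])).symm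
          _ = ∑ i : T, (if h : (i : κ) ∈ T then y ⟨(i : κ), h⟩ else 0) • v (i : κ) :=
              (Finset.sum_coe_sort T (fun i => (if h : i ∈ T then y ⟨i, h⟩ else 0) • v i)).symm
          _ = ∑ i : T, y i • v (i : κ) :=
              Finset.sum_congr rfl (fun i _ => by simp only [dif_pos i.2])
  rw [hD]
  refine isClosed_iUnion_of_finite (fun T => ?_)
  rw [Set.iUnion_eq_if]
  split_ifs with hT
  · have hker : LinearMap.ker (coneMap v T) = ⊥ := by
      rw [LinearMap.ker_eq_bot']
      intro y hy
      have := Fintype.linearIndependent_iff.mp hT y hy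
      funext i; exact this i
    have hemb := LinearMap.isClosedEmbedding_of_injective hker
    refine hemb.isClosedMap _ ?_
    have hset : {y : T → ℝ | ∀ i, 0 ≤ y i} = ⋂ i : T, {y : T → ℝ | 0 ≤ y i} := by
      ext y; simp [Set.mem_iInter]
    rw [hset]
    exact isClosed_iInter (fun i => isClosed_le continuous_const (continuous_apply i))
  · exact isClosed_empty

lemma convex_coneSet (v : κ → (m → ℝ)) : Convex ℝ (coneSet v) := by
  rintro x ⟨wx, hwx, hx⟩ y ⟨wy, hwy, hy⟩ a b ha hb _
  refine ⟨fun k => a * wx k + b * wy k, fun k => add_nonneg (mul_nonneg ha (hwx k)) (mul_nonneg hb (hwy k)), ?_⟩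
  rw [← hx, ← hy]
  rw [Finset.smul_sum, Finset.smul_sum, ← Finset.sum_add_distrib]
  refine Finset.sum_congr rfl (fun k _ => ?_)
  simp [add_smul, smul_smul]

lemma smul_mem_coneSet (v : κ → (m → ℝ)) {x : m → ℝ} (hx : x ∈ coneSet v) {t : ℝ} (ht : 0 ≤ t) :
    t • x ∈ coneSet v := by
  obtain ⟨w, hw, hsum⟩ := hx
  refine ⟨fun k => t * w k, fun k => mul_nonneg ht (hw k), ?_⟩
  rw [← hsum, Finset.smul_sum]
  exact Finset.sum_congr rfl (fun k _ => by rw [smul_smul])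

lemma generator_mem_coneSet (v : κ → (m → ℝ)) (k : κ) : v k ∈ coneSet v := by
  refine ⟨fun i => if i = k then 1 else 0, fun i => by by_cases h : i = k <;> simp [h], ?_⟩
  have h1 : ∀ i, ((if i = k then (1:ℝ) else 0) • v i) = if i = k then v i else 0 := by
    intro i; split <;> simp
  show ∑ i : κ, (if i = k then (1:ℝ) else 0) • v i = v k
  rw [Finset.sum_congr rfl (fun i _ => h1 i), Finset.sum_ite_eq' Finset.univ k]
  simp

lemma zero_mem_coneSet (v : κ → (m → ℝ)) : (0 : m → ℝ) ∈ coneSet v :=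
  ⟨0, fun _ => le_refl _, by simp⟩

lemma cone_separation (v : κ → (m → ℝ)) (b : m → ℝ) (hb : b ∉ coneSet v) :
    ∃ y : m → ℝ, (∀ k, ∑ i, v k i * y i ≤ 0) ∧ 0 < ∑ i, b i * y i := by
  obtain ⟨f, u, hfu, hub⟩ :=
    geometric_hahn_banach_closed_point (convex_coneSet v) (isClosed_coneSet v) hb
  have hu : 0 < u := by
    have := hfu 0 (zero_mem_coneSet v)
    simpa using this
  have hfneg : ∀ x ∈ coneSet v, f x ≤ 0 := by
    intro x hx
    by_contra h
    push_neg at h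
    have h2 : ((u + 1) / f x) • x ∈ coneSet v :=
      smul_mem_coneSet v hx (le_of_lt (div_pos (by linarith) h))
    have := hfu _ h2
    rw [map_smul, smul_eq_mul, div_mul_cancel₀ _ (ne_of_gt h)] at this
    linarith
  set y : m → ℝ := fun i => f (fun j => if i = j then 1 else 0) with hy
  have hfx : ∀ x : m → ℝ, f x = ∑ i, x i * y i := by
    intro x
    have := LinearMap.pi_apply_eq_sum_univ (f.toLinearMap) x
    simpa [hy, smul_eq_mul] using this
  refine ⟨y, fun k => ?_, ?_⟩
  · rw [← hfx]; exact hfneg _ (generator_mem_coneSet v k)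
  · rw [← hfx]; linarith

/-- Farkas alternative for `x ≥ 0, Ax ≥ b`. -/
theorem farkas_alt {n : Type} [Fintype n] [DecidableEq n] (A : m → n → ℝ) (b : m → ℝ) :
    (∃ x : n → ℝ, (∀ j, 0 ≤ x j) ∧ ∀ i, b i ≤ ∑ j, A i j * x j) ∨
    (∃ y : m → ℝ, (∀ i, 0 ≤ y i) ∧ (∀ j, ∑ i, y i * A i j ≤ 0) ∧ 0 < ∑ i, y i * b i) := by
  classical
  set v : (n ⊕ m) → (m → ℝ) := fun k => Sum.elim (fun j => fun i => A i j)
    (fun i₀ => fun i => if i = i₀ then (-1 : ℝ) else 0) k with hv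
  by_cases hb : b ∈ coneSet v
  · left
    obtain ⟨w, hw, hsum⟩ := hb
    refine ⟨fun j => w (Sum.inl j), fun j => hw _, fun i => ?_⟩
    have h0 := congrFun hsum i
    rw [Fintype.sum_sum_type] at h0
    simp only [hv, Sum.elim_inl, Sum.elim_inr, Pi.add_apply, Finset.sum_apply,
      Pi.smul_apply, smul_eq_mul] at h0
    have h2 : ∑ i₀ : m, w (Sum.inr i₀) * (if i = i₀ then (-1:ℝ) else 0) = - w (Sum.inr i) := by
      rw [Finset.sum_congr rfl (fun i₀ (_ : i₀ ∈ Finset.univ) => by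
        rw [mul_ite, mul_neg_one, mul_zero])]
      simp [Finset.sum_ite_eq]
    rw [h2] at h0
    have h3 : 0 ≤ w (Sum.inr i) := hw _
    have h4 : ∑ x : n, w (Sum.inl x) * A i x = ∑ j, A i j * w (Sum.inl j) :=
      Finset.sum_congr rfl (fun j _ => mul_comm _ _)
    show b i ≤ ∑ j, A i j * w (Sum.inl j)
    rw [← h4]
    linarith
  · right
    obtain ⟨y, hyk, hyb⟩ := cone_separation v b hb
    refine ⟨y, fun i => ?_, fun j => ?_, ?_⟩
    · have h0 := hyk (Sum.inr i)
      simp only [hv, Sum.elim_inr] at h0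
      have h2 : ∑ i' : m, (if i' = i then (-1:ℝ) else 0) * y i' = - y i := by
        rw [Finset.sum_congr rfl (fun i' (_ : i' ∈ Finset.univ) => by
          rw [ite_mul, neg_one_mul, zero_mul])]
        simp [Finset.sum_ite_eq']
      rw [h2] at h0
      linarith
    · have h0 := hyk (Sum.inl j)
      simp only [hv, Sum.elim_inl] at h0
      calc ∑ i, y i * A i j = ∑ i, A i j * y i :=
            Finset.sum_congr rfl (fun i _ => mul_comm _ _)
        _ ≤ 0 := h0
    · calc (0:ℝ) < ∑ i, b i * y i := hyb
        _ = ∑ i, y i * b i := Finset.sum_congr rfl (fun i _ => mul_comm _ _)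

end Farkas


section MarkovLemmas
variable {S : Type} [Fintype S] [DecidableEq S]

lemma exists_minimalAbsorbing (P : S → S → ℝ) [Nonempty S] :
    ∃ B : Finset S, IsMinimalAbsorbing P B := by
  suffices h : ∀ (k : ℕ) (B : Finset S), B.card ≤ k → IsAbsorbing P B →
      ∃ B' ⊆ B, IsMinimalAbsorbing P B' by
    obtain ⟨B', _, hB'⟩ := h Finset.univ.card Finset.univ (le_refl _)
      ⟨Finset.univ_nonempty, fun c _ d _ => Finset.mem_univ d⟩
    exact ⟨B', hB'⟩
  intro k
  induction k with
  | zero =>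
    intro B hcard hB
    rw [Nat.le_zero, Finset.card_eq_zero] at hcard
    rw [hcard] at hB
    exact absurd hB.1 (by simp)
  | succ k ih =>
    intro B hcard hB
    by_cases hmin : ∀ B' ⊆ B, IsAbsorbing P B' → B' = B
    · exact ⟨B, Finset.Subset.refl B, hB, hmin⟩
    · push_neg at hmin
      obtain ⟨B', hB'B, hB'abs, hne⟩ := hmin
      have hlt : B'.card < B.card := Finset.card_lt_card (lt_of_le_of_ne hB'B hne)
      obtain ⟨B'', h1, h2⟩ := ih B' (by omega) hB'abs
      exact ⟨B'', h1.trans hB'B, h2⟩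

lemma stationary_full_support (P : S → S → ℝ) (hP : ∀ x d, 0 ≤ P x d) {π : S → ℝ} {B : Finset S}
    (hmin : IsMinimalAbsorbing P B) (hπ : IsMixed π) (hst : IsDevStationary P π)
    (hsupp : ∀ x, π x ≠ 0 → x ∈ B) : ∀ x ∈ B, π x ≠ 0 := by
  classical
  set B' : Finset S := {x | π x ≠ 0} with hB'
  have hB'B : B' ⊆ B := fun x hx => hsupp x (by simpa [hB'] using hx)
  have habs : IsAbsorbing P B' := by
    constructor
    · by_contra hempty
      rw [Finset.not_nonempty_iff_eq_empty] at hempty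
      have hzero : ∀ x, π x = 0 := by
        intro x
        by_contra hx
        have : x ∈ B' := by simp [hB', hx]
        rw [hempty] at this
        exact absurd this (Finset.notMem_empty x)
      have := hπ.2
      rw [Finset.sum_eq_zero (fun x _ => hzero x)] at this
      norm_num at this
    · intro x hx d hd
      have hπx : 0 < π x := lt_of_le_of_ne (hπ.1 x) (Ne.symm (by simpa [hB'] using hx))
      have hπd : π d = devImage P π d := (congrFun hst d).symm
      have hge : π x * P x d ≤ devImage P π d := by
        refine Finset.single_le_sum (f := fun c => π c * P c d) ?_ (Finset.mem_univ x)
        intro c _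
        exact mul_nonneg (hπ.1 c) (hP c d)
      have : 0 < π d := by
        rw [hπd]
        exact lt_of_lt_of_le (mul_pos hπx hd) hge
      simp [hB', ne_of_gt this]
  have := hmin.2 B' hB'B habs
  intro x hx
  rw [← this] at hx
  simpa [hB'] using hx

lemma exists_stationary_on (P : S → S → ℝ) (hP : ∀ x, IsMixed (P x)) {B : Finset S}
    (hB : IsAbsorbing P B) :
    ∃ π : S → ℝ, IsMixed π ∧ IsDevStationary P π ∧ ∀ x, π x ≠ 0 → x ∈ B := by
  classical
  set A : ((S ⊕ S) ⊕ (S ⊕ Unit)) → S → ℝ := Sum.elim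
    (Sum.elim (fun y x => P x y - (if x = y then 1 else 0))
              (fun y x => -(P x y - (if x = y then 1 else 0))))
    (Sum.elim (fun x₀ x => if x₀ ∉ B ∧ x = x₀ then -1 else 0)
              (fun _ _ => 1)) with hA
  set b : ((S ⊕ S) ⊕ (S ⊕ Unit)) → ℝ := Sum.elim (fun _ => 0)
    (Sum.elim (fun _ => 0) (fun _ => 1)) with hb
  rcases farkas_alt A b with ⟨π, hπ0, hπc⟩ | ⟨y, hy0, hyA, hyb⟩
  · -- feasible: normalize
    have hrow : ∀ z, ∑ x, (P x z - (if x = z then 1 else 0)) * π x = 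
        devImage P π z - π z := by
      intro z
      rw [Finset.sum_congr rfl (fun x (_ : x ∈ Finset.univ) => sub_mul (P x z) _ (π x))]
      rw [Finset.sum_sub_distrib]
      congr 1
      · exact Finset.sum_congr rfl (fun x _ => mul_comm _ _)
      · have hit : ∀ x, (if x = z then (1:ℝ) else 0) * π x = if x = z then π x else 0 := by
          intro x; by_cases h : x = z <;> simp [h]
        rw [Finset.sum_congr rfl (fun x _ => hit x)]
        simp [Finset.sum_ite_eq']
    have hstat : ∀ z, devImage P π z = π z := by
      intro z
      have h1 := hπc (Sum.inl (Sum.inl z))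
      have h2 := hπc (Sum.inl (Sum.inr z))
      simp only [hA, hb, Sum.elim_inl, Sum.elim_inr] at h1 h2
      rw [hrow z] at h1
      have h2' : ∑ x, -(P x z - (if x = z then 1 else 0)) * π x
          = -(devImage P π z - π z) := by
        rw [Finset.sum_congr rfl (fun x (_ : x ∈ Finset.univ) => by rw [neg_mul]),
          Finset.sum_neg_distrib, hrow z]
      rw [h2'] at h2
      linarith
    have hoff : ∀ x₀, x₀ ∉ B → π x₀ = 0 := by
      intro x₀ hx₀
      have h1 := hπc (Sum.inr (Sum.inl x₀))
      simp only [hA, hb, Sum.elim_inl, Sum.elim_inr] at h1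
      have h2 : ∑ x, (if x₀ ∉ B ∧ x = x₀ then (-1:ℝ) else 0) * π x = -π x₀ := by
        rw [Finset.sum_congr rfl (fun x (_ : x ∈ Finset.univ) => by
          rw [ite_mul, neg_one_mul, zero_mul])]
        have : ∀ x, (if x₀ ∉ B ∧ x = x₀ then -π x else 0) = (if x = x₀ then -π x else 0) := by
          intro x
          by_cases h : x = x₀ <;> simp [h, hx₀]
        rw [Finset.sum_congr rfl (fun x _ => this x)]
        simp [Finset.sum_ite_eq']
      rw [h2] at h1
      have := hπ0 x₀
      linarith
    have hsum1 : 1 ≤ ∑ x, π x := by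
      have h1 := hπc (Sum.inr (Sum.inr ()))
      simp only [hA, hb, Sum.elim_inl, Sum.elim_inr] at h1
      calc (1:ℝ) ≤ ∑ x, 1 * π x := h1
        _ = ∑ x, π x := Finset.sum_congr rfl (fun x _ => one_mul _)
    have hspos : 0 < ∑ x, π x := lt_of_lt_of_le one_pos hsum1
    refine ⟨fun x => π x / (∑ x', π x'), ⟨fun x => div_nonneg (hπ0 x) (le_of_lt hspos), ?_⟩, ?_, ?_⟩
    · rw [← Finset.sum_div, div_self (ne_of_gt hspos)]
    · funext z
      show devImage P (fun x => π x / (∑ x', π x')) z = π z / (∑ x', π x')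
      have hdiv : devImage P (fun x => π x / (∑ x', π x')) z
          = (devImage P π z) / (∑ x', π x') := by
        unfold devImage
        rw [Finset.sum_div]
        refine Finset.sum_congr rfl (fun x _ => ?_)
        show π x / (∑ x', π x') * P x z = π x * P x z / (∑ x', π x')
        rw [div_mul_eq_mul_div]
      rw [hdiv, hstat z]
    · intro x hx
      by_contra hxB
      apply hx
      show π x / (∑ x', π x') = 0
      rw [hoff x hxB, zero_div]
  · -- infeasible certificate: contradiction
    exfalso
    set g : S → ℝ := fun z => y (Sum.inl (Sum.inl z)) - y (Sum.inl (Sum.inr z)) with hg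
    set t : ℝ := y (Sum.inr (Sum.inr ())) with htdef
    have htpos : 0 < t := by
      have := hyb
      rw [Fintype.sum_sum_type, Fintype.sum_sum_type, Fintype.sum_sum_type] at this
      simp only [hb, Sum.elim_inl, Sum.elim_inr, mul_zero, mul_one, Finset.sum_const_zero,
        add_zero, zero_add] at this
      simpa using this
    obtain ⟨x₀, hx₀B, hx₀min⟩ := Finset.exists_min_image B g hB.1
    have hkey := hyA x₀
    rw [Fintype.sum_sum_type, Fintype.sum_sum_type, Fintype.sum_sum_type] at hkey
    simp only [hA, Sum.elim_inl, Sum.elim_inr, mul_one] at hkey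
    have hc1 : ∑ z, y (Sum.inl (Sum.inl z)) * (P x₀ z - (if x₀ = z then 1 else 0))
        + ∑ z, y (Sum.inl (Sum.inr z)) * -(P x₀ z - (if x₀ = z then 1 else 0))
        = ∑ z, g z * (P x₀ z - (if x₀ = z then 1 else 0)) := by
      rw [← Finset.sum_add_distrib]
      refine Finset.sum_congr rfl (fun z _ => ?_)
      rw [hg]; ring
    have hc2 : ∑ z, g z * (P x₀ z - (if x₀ = z then 1 else 0))
        = (∑ z, g z * P x₀ z) - g x₀ := by
      rw [Finset.sum_congr rfl (fun z (_ : z ∈ Finset.univ) => mul_sub (g z) _ _),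
        Finset.sum_sub_distrib]
      congr 1
      have hit : ∀ z, g z * (if x₀ = z then (1:ℝ) else 0) = if x₀ = z then g z else 0 := by
        intro z; by_cases h : x₀ = z <;> simp [h]
      rw [Finset.sum_congr rfl (fun z _ => hit z)]
      simp [Finset.sum_ite_eq]
    have hc3 : ∑ z, y (Sum.inr (Sum.inl z)) * (if z ∉ B ∧ x₀ = z then (-1:ℝ) else 0) = 0 := by
      refine Finset.sum_eq_zero (fun z _ => ?_)
      by_cases h : z ∉ B ∧ x₀ = z
      · exfalso; obtain ⟨h1, h2⟩ := h; rw [← h2] at h1; exact h1 hx₀B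
      · simp [h]
    have hsum_unit : ∑ _ : Unit, y (Sum.inr (Sum.inr ())) = t := by simp [htdef]
    have hglb : g x₀ ≤ ∑ z, g z * P x₀ z := by
      have hpt : ∀ z, g x₀ * P x₀ z ≤ g z * P x₀ z := by
        intro z
        rcases eq_or_lt_of_le ((hP x₀).1 z) with heq | hpos
        · rw [← heq, mul_zero, mul_zero]
        · have hzB : z ∈ B := hB.2 x₀ hx₀B z hpos
          exact mul_le_mul_of_nonneg_right (hx₀min z hzB) (le_of_lt hpos)
      calc g x₀ = g x₀ * ∑ z, P x₀ z := by rw [(hP x₀).2, mul_one]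
        _ = ∑ z, g x₀ * P x₀ z := by rw [Finset.mul_sum]
        _ ≤ ∑ z, g z * P x₀ z := Finset.sum_le_sum (fun z _ => hpt z)
    rw [hc3] at hkey
    -- hkey : ∑ inl-inl + ∑ inl-inr + (0 + ∑ unit) ≤ 0 roughly; rearrange
    have hfinal : (∑ z, g z * P x₀ z) - g x₀ + t ≤ 0 := by
      rw [← hc2, ← hc1]
      have hu : ∑ _ : Unit, y (Sum.inr (Sum.inr ())) * 1 = t := by simp [htdef]
      linarith [hkey, hu]
    linarith

end MarkovLemmas

section GamesLemmas
variable {N : Type} [Fintype N] [DecidableEq N]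
  {C : N → Type} [∀ i, Fintype (C i)] [∀ i, DecidableEq (C i)]

def flipEquiv (i : N) : ((∀ j, C j) × C i) ≃ ((∀ j, C j) × C i) where
  toFun p := (Function.update p.1 i p.2, p.1 i)
  invFun p := (Function.update p.1 i p.2, p.1 i)
  left_inv p := by
    refine Prod.ext ?_ ?_
    · show Function.update (Function.update p.1 i p.2) i (p.1 i) = p.1
      rw [Function.update_idem, Function.update_eq_self]
    · show (Function.update p.1 i p.2) i = p.2
      rw [Function.update_self]
  right_inv p := by
    refine Prod.ext ?_ ?_
    · show Function.update (Function.update p.1 i p.2) i (p.1 i) = p.1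
      rw [Function.update_idem, Function.update_eq_self]
    · show (Function.update p.1 i p.2) i = p.2
      rw [Function.update_self]

lemma sum_prod_step (U : ∀ i : N, (∀ j, C j) → ℝ) (α : ∀ i, C i → C i → ℝ)
    (σ : ∀ j, C j → ℝ) (i : N) (hst : IsDevStationary (α i) (σ i)) :
    ∑ c : ∀ j, C j, (∏ j, σ j (c j)) * (∑ d, α i (c i) d * U i (Function.update c i d))
      = ∑ c : ∀ j, C j, (∏ j, σ j (c j)) * U i c := by
  classical
  have h1 : ∑ c : ∀ j, C j, (∏ j, σ j (c j)) * (∑ d, α i (c i) d * U i (Function.update c i d))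
      = ∑ p : (∀ j, C j) × C i,
          (∏ j, σ j (p.1 j)) * (α i (p.1 i) p.2 * U i (Function.update p.1 i p.2)) := by
    rw [Fintype.sum_prod_type]
    exact Finset.sum_congr rfl (fun c _ => by rw [Finset.mul_sum])
  rw [h1]
  have h2 := Equiv.sum_comp (flipEquiv i) (fun p : (∀ j, C j) × C i =>
    (∏ j, σ j (p.1 j)) * (α i (p.1 i) p.2 * U i (Function.update p.1 i p.2)))
  rw [← h2]
  simp only [flipEquiv, Equiv.coe_fn_mk]
  rw [Fintype.sum_prod_type]
  refine Finset.sum_congr rfl (fun c _ => ?_)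
  have h3 : ∀ d : C i, (∏ j, σ j (Function.update c i d j))
      = σ i d * ∏ j ∈ Finset.univ.erase i, σ j (c j) := by
    intro d
    rw [← Finset.mul_prod_erase Finset.univ (fun j => σ j (Function.update c i d j))
      (Finset.mem_univ i)]
    congr 1
    · rw [Function.update_self]
    · exact Finset.prod_congr rfl
        (fun j hj => by rw [Function.update_of_ne (Finset.ne_of_mem_erase hj)])
  have h4 : ∀ d : C i, Function.update (Function.update c i d) i (c i) = c := by
    intro d; rw [Function.update_idem, Function.update_eq_self]
  have h5 : ∀ d : C i, (Function.update c i d) i = d := fun d => Function.update_self i d c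
  calc ∑ d, (∏ j, σ j (Function.update c i d j)) *
        (α i (Function.update c i d i) (c i) * U i (Function.update (Function.update c i d) i (c i)))
      = ∑ d, (σ i d * α i d (c i)) * ((∏ j ∈ Finset.univ.erase i, σ j (c j)) * U i c) := by
        refine Finset.sum_congr rfl (fun d _ => ?_)
        rw [h3 d, h4 d, h5 d]
        ring
    _ = (∑ d, σ i d * α i d (c i)) * ((∏ j ∈ Finset.univ.erase i, σ j (c j)) * U i c) := by
        rw [Finset.sum_mul]
    _ = (∏ j, σ j (c j)) * U i c := by
        have h6 : (∑ d, σ i d * α i d (c i)) = σ i (c i) := congrFun hst (c i)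
        rw [h6, ← mul_assoc,
          Finset.mul_prod_erase Finset.univ (fun j => σ j (c j)) (Finset.mem_univ i)]

lemma sum_prod_devGain (U : ∀ i : N, (∀ j, C j) → ℝ) (α : ∀ i, C i → C i → ℝ)
    (σ : ∀ j, C j → ℝ) (hst : ∀ i, IsDevStationary (α i) (σ i)) :
    ∑ c : ∀ j, C j, (∏ j, σ j (c j)) * devGain U α c = 0 := by
  unfold devGain
  have h : ∀ c : ∀ j, C j, (∏ j, σ j (c j)) *
        (∑ i, ((∑ d, α i (c i) d * U i (Function.update c i d)) - U i c))
      = ∑ i, ((∏ j, σ j (c j)) * (∑ d, α i (c i) d * U i (Function.update c i d))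
          - (∏ j, σ j (c j)) * U i c) := by
    intro c
    rw [Finset.mul_sum]
    exact Finset.sum_congr rfl (fun i _ => by ring)
  rw [Finset.sum_congr rfl (fun c _ => h c), Finset.sum_comm]
  refine Finset.sum_eq_zero (fun i _ => ?_)
  rw [Finset.sum_sub_distrib, sum_prod_step U α σ i (hst i), sub_self]

lemma devGain_eq_zero_of_stationary (U : ∀ i : N, (∀ j, C j) → ℝ) (α : ∀ i, C i → C i → ℝ)
    (hα : IsDualVector U α) (σ : ∀ j, C j → ℝ) (hm : ∀ i, IsMixed (σ i))
    (hst : ∀ i, IsDevStationary (α i) (σ i)) {c : ∀ j, C j} (hc : (∏ j, σ j (c j)) ≠ 0) :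
    devGain U α c = 0 := by
  have hz := sum_prod_devGain U α σ hst
  have hnn : ∀ c' : ∀ j, C j, 0 ≤ (∏ j, σ j (c' j)) * devGain U α c' := fun c' =>
    mul_nonneg (Finset.prod_nonneg (fun j _ => (hm j).1 (c' j))) (hα.2 c')
  have h0 := (Finset.sum_eq_zero_iff_of_nonneg (fun c' _ => hnn c')).mp hz c (Finset.mem_univ c)
  rcases mul_eq_zero.mp h0 with h | h
  · exact absurd h hc
  · exact h

lemma devGain_avg (U : ∀ i : N, (∀ j, C j) → ℝ) (α β : ∀ i, C i → C i → ℝ) (c : ∀ j, C j) :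
    devGain U (fun i x d => (α i x d + β i x d) / 2) c
      = (devGain U α c + devGain U β c) / 2 := by
  unfold devGain
  rw [← Finset.sum_add_distrib, Finset.sum_div]
  refine Finset.sum_congr rfl (fun i _ => ?_)
  have h1 : ∑ d, (α i (c i) d + β i (c i) d) / 2 * U i (Function.update c i d)
      = ∑ d, (α i (c i) d * U i (Function.update c i d)
          + β i (c i) d * U i (Function.update c i d)) / 2 :=
    Finset.sum_congr rfl (fun d _ => by ring)
  rw [h1, ← Finset.sum_div, Finset.sum_add_distrib]
  ring

lemma exists_strong_dual (U : ∀ i : N, (∀ j, C j) → ℝ) {c : ∀ j, C j}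
    (h : ∀ μ, IsCorrelatedEq U μ → μ c = 0) :
    ∃ β : ∀ i, C i → C i → ℝ, IsDualVector U β ∧ 0 < devGain U β c := by
  classical
  set A : ((Σ i : N, C i × C i) ⊕ Unit) → (∀ j, C j) → ℝ := Sum.elim
    (fun p a => -(if a p.1 = p.2.1 then U p.1 (Function.update a p.1 p.2.2) - U p.1 a else 0))
    (fun _ a => if a = c then 1 else 0) with hA
  set b : ((Σ i : N, C i × C i) ⊕ Unit) → ℝ := Sum.elim (fun _ => 0) (fun _ => 1) with hb
  rcases farkas_alt A b with ⟨μ, hμ0, hμc⟩ | ⟨y, hy0, hyA, hyb⟩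
  · exfalso
    have hinc : ∀ (i : N) (x d : C i), incentiveSum U μ i x d ≤ 0 := by
      intro i x d
      have h1 := hμc (Sum.inl ⟨i, (x, d)⟩)
      simp only [hA, hb, Sum.elim_inl] at h1
      have h2 : ∑ a : ∀ j, C j,
          -(if a i = x then U i (Function.update a i d) - U i a else 0) * μ a
          = - incentiveSum U μ i x d := by
        unfold incentiveSum
        rw [← Finset.sum_neg_distrib]
        refine Finset.sum_congr rfl (fun a _ => ?_)
        by_cases hax : a i = x <;> simp [hax] <;> ring
      rw [h2] at h1
      linarith
    have hμc1 : 1 ≤ μ c := by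
      have h1 := hμc (Sum.inr ())
      simp only [hA, hb, Sum.elim_inr] at h1
      have h2 : ∑ a : ∀ j, C j, (if a = c then (1:ℝ) else 0) * μ a = μ c := by
        have hit : ∀ a : ∀ j, C j, (if a = c then (1:ℝ) else 0) * μ a
            = if a = c then μ a else 0 := by
          intro a; by_cases hac : a = c <;> simp [hac]
        rw [Finset.sum_congr rfl (fun a _ => hit a)]
        simp [Finset.sum_ite_eq']
      rw [h2] at h1
      exact h1
    set s : ℝ := ∑ a : ∀ j, C j, μ a with hs
    have hscge : μ c ≤ s := Finset.single_le_sum (fun a _ => hμ0 a) (Finset.mem_univ c)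
    have hspos : 0 < s := lt_of_lt_of_le one_pos (le_trans hμc1 hscge)
    have hCE : IsCorrelatedEq U (fun a => μ a / s) := by
      refine ⟨fun a => div_nonneg (hμ0 a) (le_of_lt hspos), ?_, ?_⟩
      · rw [← Finset.sum_div, div_self (ne_of_gt hspos)]
      · intro i x d
        have h2 : incentiveSum U (fun a => μ a / s) i x d = incentiveSum U μ i x d / s := by
          unfold incentiveSum
          rw [Finset.sum_div]
          refine Finset.sum_congr rfl (fun a _ => ?_)
          by_cases hax : a i = x <;> simp [hax] <;> ring
        rw [h2]
        exact div_nonpos_of_nonpos_of_nonneg (hinc i x d) (le_of_lt hspos)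
    have := h _ hCE
    rw [div_eq_zero_iff] at this
    rcases this with h' | h'
    · linarith
    · exact absurd h' (ne_of_gt hspos)
  · -- construct the dual vector from the certificate
    set lam : ∀ i : N, C i → C i → ℝ := fun i x d => y (Sum.inl ⟨i, (x, d)⟩) with hlam
    set t : ℝ := y (Sum.inr ()) with ht
    have hlam0 : ∀ i x d, 0 ≤ lam i x d := fun i x d => hy0 _
    have htpos : 0 < t := by
      have := hyb
      rw [Fintype.sum_sum_type] at this
      simp only [hb, Sum.elim_inl, Sum.elim_inr, mul_zero, mul_one, Finset.sum_const_zero,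
        zero_add] at this
      simpa using this
    set Sval : (∀ j, C j) → ℝ := fun a =>
      ∑ i, ∑ d, lam i (a i) d * (U i (Function.update a i d) - U i a) with hSval
    have hkey : ∀ a : ∀ j, C j, (if a = c then t else 0) ≤ Sval a := by
      intro a
      have h1 := hyA a
      rw [Fintype.sum_sum_type] at h1
      simp only [hA, Sum.elim_inl, Sum.elim_inr] at h1
      have h2 : ∑ p : Σ i : N, C i × C i, y (Sum.inl p) *
            -(if a p.1 = p.2.1 then U p.1 (Function.update a p.1 p.2.2) - U p.1 a else 0)
          = - Sval a := by
        rw [hSval, ← Finset.sum_neg_distrib]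
        rw [← Finset.univ_sigma_univ, Finset.sum_sigma]
        refine Finset.sum_congr rfl (fun i _ => ?_)
        rw [Fintype.sum_prod_type, ← Finset.sum_neg_distrib]
        have h3 : ∀ x : C i, ∑ d : C i, y (Sum.inl ⟨i, (x, d)⟩) *
              -(if a i = x then U i (Function.update a i d) - U i a else 0)
            = if a i = x then
                -∑ d : C i, lam i x d * (U i (Function.update a i d) - U i a) else 0 := by
          intro x
          by_cases hax : a i = x
          · simp only [hax, if_true, hlam]
            rw [← Finset.sum_neg_distrib]
            exact Finset.sum_congr rfl (fun d _ => by ring)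
          · simp [hax]
        rw [Finset.sum_congr rfl (fun x _ => h3 x)]
        rw [Finset.sum_ite_eq]
        simp
      have h4 : ∑ u : Unit, y (Sum.inr u) * (if a = c then (1:ℝ) else 0)
          = if a = c then t else 0 := by
        rw [Fintype.sum_unique (fun u : Unit => y (Sum.inr u) * (if a = c then (1:ℝ) else 0))]
        by_cases hac : a = c
        · rw [if_pos hac, if_pos hac, mul_one]
        · rw [if_neg hac, if_neg hac, mul_zero]
      rw [h2, h4] at h1
      linarith
    set R : ∀ i : N, C i → ℝ := fun i x => ∑ d, lam i x d with hR
    have hR0 : ∀ i x, 0 ≤ R i x := fun i x => Finset.sum_nonneg (fun d _ => hlam0 i x d)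
    set T : ℝ := ∑ i, ∑ x, R i x with hT
    have hT0 : 0 ≤ T := Finset.sum_nonneg (fun i _ => Finset.sum_nonneg (fun x _ => hR0 i x))
    have hRT : ∀ i x, R i x ≤ T := by
      intro i x
      calc R i x ≤ ∑ x', R i x' :=
            Finset.single_le_sum (fun x' _ => hR0 i x') (Finset.mem_univ x)
        _ ≤ T := Finset.single_le_sum (f := fun i' => ∑ x', R i' x')
            (fun i' _ => Finset.sum_nonneg (fun x' _ => hR0 i' x')) (Finset.mem_univ i)
    set K : ℝ := T + 1 with hK
    have hKpos : 0 < K := by linarith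
    set β : ∀ i : N, C i → C i → ℝ :=
      fun i x d => ((if d = x then K - R i x else 0) + lam i x d) / K with hβ
    have hβmixed : ∀ i x, IsMixed (β i x) := by
      intro i x
      constructor
      · intro d
        refine div_nonneg ?_ (le_of_lt hKpos)
        have := hRT i x
        by_cases hdx : d = x
        · simp only [hdx, if_true]
          have := hlam0 i x x
          linarith [hRT i x]
        · simp only [hdx, if_false]
          linarith [hlam0 i x d]
      · rw [← Finset.sum_div]
        rw [Finset.sum_add_distrib]
        rw [Finset.sum_ite_eq' Finset.univ x (fun _ => K - R i x)]
        simp only [Finset.mem_univ, if_true, ← hR]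
        field_simp
        simp only [hR]
        ring
    have hdev : ∀ a : ∀ j, C j, devGain U β a = Sval a / K := by
      intro a
      have hterm : ∀ i : N, (∑ d, β i (a i) d * U i (Function.update a i d)) - U i a
          = (∑ d, lam i (a i) d * (U i (Function.update a i d) - U i a)) / K := by
        intro i
        have e2 : U i a = ∑ d, β i (a i) d * U i a := by
          rw [← Finset.sum_mul, (hβmixed i (a i)).2, one_mul]
        have e1 : (∑ d, β i (a i) d * U i (Function.update a i d)) - U i a
            = ∑ d, β i (a i) d * (U i (Function.update a i d) - U i a) := by
          calc (∑ d, β i (a i) d * U i (Function.update a i d)) - U i a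
              = (∑ d, β i (a i) d * U i (Function.update a i d))
                - ∑ d, β i (a i) d * U i a := by rw [← e2]
            _ = ∑ d, (β i (a i) d * U i (Function.update a i d) - β i (a i) d * U i a) := by
                rw [Finset.sum_sub_distrib]
            _ = ∑ d, β i (a i) d * (U i (Function.update a i d) - U i a) :=
                Finset.sum_congr rfl (fun d _ => by ring)
        rw [e1, Finset.sum_div]
        refine Finset.sum_congr rfl (fun d _ => ?_)
        by_cases hda : d = a i
        · have hzero : U i (Function.update a i d) - U i a = 0 := by
            rw [hda, Function.update_eq_self, sub_self]
          rw [hzero, mul_zero, mul_zero, zero_div]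
        · show ((if d = a i then K - R i (a i) else 0) + lam i (a i) d) / K *
              (U i (Function.update a i d) - U i a) = _
          rw [if_neg hda, zero_add, div_mul_eq_mul_div]
      unfold devGain
      calc ∑ i, ((∑ d, β i (a i) d * U i (Function.update a i d)) - U i a)
          = ∑ i, (∑ d, lam i (a i) d * (U i (Function.update a i d) - U i a)) / K :=
            Finset.sum_congr rfl (fun i _ => hterm i)
        _ = Sval a / K := (Finset.sum_div _ _ _).symm
    refine ⟨β, ⟨hβmixed, fun a => ?_⟩, ?_⟩
    · rw [hdev a]
      refine div_nonneg ?_ (le_of_lt hKpos)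
      have := hkey a
      by_cases hac : a = c
      · rw [hac] at this ⊢
        simp only [if_true] at this
        linarith
      · simp only [hac, if_false] at this
        exact this
    · rw [hdev c]
      refine div_pos ?_ hKpos
      have := hkey c
      simp only [if_true] at this
      linarith

end GamesLemmas

/-- In any full dual reduction, every pure strategy profile with probability zero in all
correlated equilibria, and every pure strategy with marginal probability zero in all
correlated equilibria, is eliminated. -/
theorem full_dual_reduction_eliminates_unplayed
    {N : Type} [Fintype N] [DecidableEq N] [Nonempty N]
    {C : N → Type} [∀ i, Fintype (C i)] [∀ i, DecidableEq (C i)] [∀ i, Nonempty (C i)]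
    (U : ∀ i : N, (∀ j, C j) → ℝ) (α : ∀ i, C i → C i → ℝ)
    (hα : IsDualVector U α) (hfull : IsFull U α) :
    (∀ c : ∀ j, C j, (∀ μ, IsCorrelatedEq U μ → μ c = 0) →
      ∀ σ : ∀ i, C i → ℝ, (∀ i, σ i ∈ ReducedSet (α i)) → (∏ i, σ i (c i)) = 0) ∧
    (∀ (i : N) (cᵢ : C i), (∀ μ, IsCorrelatedEq U μ → marginal μ i cᵢ = 0) →
      ∀ σᵢ ∈ ReducedSet (α i), σᵢ cᵢ = 0) := by
  classical
  have part1 : ∀ c : ∀ j, C j, (∀ μ, IsCorrelatedEq U μ → μ c = 0) →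
      ∀ σ : ∀ i, C i → ℝ, (∀ i, σ i ∈ ReducedSet (α i)) → (∏ i, σ i (c i)) = 0 := by
    intro c hc σ hσ
    by_contra hprod
    obtain ⟨β, hβ, hβc⟩ := exists_strong_dual U hc
    set γ : ∀ i, C i → C i → ℝ := fun i x d => (α i x d + β i x d) / 2 with hγ
    have hγmixed : ∀ i x, IsMixed (γ i x) := by
      intro i x
      constructor
      · intro d
        have h1 := (hα.1 i x).1 d
        have h2 := (hβ.1 i x).1 d
        show 0 ≤ (α i x d + β i x d) / 2
        linarith
      · show ∑ d, (α i x d + β i x d) / 2 = 1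
        rw [← Finset.sum_div, Finset.sum_add_distrib, (hα.1 i x).2, (hβ.1 i x).2]
        norm_num
    have hγdev : ∀ a, devGain U γ a = (devGain U α a + devGain U β a) / 2 :=
      fun a => devGain_avg U α β a
    have hγdual : IsDualVector U γ := by
      refine ⟨hγmixed, fun a => ?_⟩
      rw [hγdev a]
      linarith [hα.2 a, hβ.2 a]
    have hγc : 0 < devGain U γ c := by
      rw [hγdev c]
      linarith [hα.2 c]
    have hpattern : ∀ (i : N) (x d : C i), 0 < α i x d ↔ 0 < γ i x d := by
      intro i x d
      constructor
      · intro hpos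
        have := (hβ.1 i x).1 d
        show 0 < (α i x d + β i x d) / 2
        linarith
      · intro hpos
        have h2 : 0 < α i x d + β i x d := by
          have h3 : 0 < (α i x d + β i x d) / 2 := hpos
          linarith
        rcases lt_or_ge 0 (α i x d) with h3 | h3
        · exact h3
        · have hbpos : 0 < β i x d := by linarith
          exact hfull i x d ⟨β, hβ, hbpos⟩
    have habs_iff : ∀ (i : N) (B : Finset (C i)),
        IsAbsorbing (α i) B ↔ IsAbsorbing (γ i) B := by
      intro i B
      constructor
      · rintro ⟨h1, h2⟩
        exact ⟨h1, fun x hx d hd => h2 x hx d ((hpattern i x d).mpr hd)⟩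
      · rintro ⟨h1, h2⟩
        exact ⟨h1, fun x hx d hd => h2 x hx d ((hpattern i x d).mp hd)⟩
    have hci : ∀ i, σ i (c i) ≠ 0 := by
      intro i h0
      exact hprod (Finset.prod_eq_zero (Finset.mem_univ i) h0)
    have hminB : ∀ i, ∃ B : Finset (C i), IsMinimalAbsorbing (α i) B ∧
        ∀ s, σ i s ≠ 0 → s ∈ B := fun i => (hσ i).2.2
    choose Bs hBmin hBsupp using hminB
    have hγmin : ∀ i, IsMinimalAbsorbing (γ i) (Bs i) := by
      intro i
      obtain ⟨h1, h2⟩ := hBmin i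
      exact ⟨(habs_iff i (Bs i)).mp h1,
        fun B' hB' habs' => h2 B' hB' ((habs_iff i B').mpr habs')⟩
    have hτex : ∀ i, ∃ τ : C i → ℝ, IsMixed τ ∧ IsDevStationary (γ i) τ ∧
        ∀ x, τ x ≠ 0 → x ∈ Bs i :=
      fun i => exists_stationary_on (γ i) (fun x => hγmixed i x) (hγmin i).1
    choose τ hτm hτst hτsupp using hτex
    have hτfull : ∀ i, ∀ x ∈ Bs i, τ i x ≠ 0 := fun i =>
      stationary_full_support (γ i) (fun x d => (hγmixed i x).1 d) (hγmin i)
        (hτm i) (hτst i) (hτsupp i)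
    have hcB : ∀ i, c i ∈ Bs i := fun i => hBsupp i (c i) (hci i)
    have hτc : (∏ i, τ i (c i)) ≠ 0 :=
      Finset.prod_ne_zero_iff.mpr (fun i _ => hτfull i (c i) (hcB i))
    have hzero := devGain_eq_zero_of_stationary U γ hγdual τ hτm hτst hτc
    linarith
  refine ⟨part1, ?_⟩
  intro i cᵢ hm σᵢ hσᵢ
  have hne : ∀ j, ∃ σ', σ' ∈ ReducedSet (α j) := by
    intro j
    obtain ⟨B, hB⟩ := exists_minimalAbsorbing (α j)
    obtain ⟨π, h1, h2, h3⟩ := exists_stationary_on (α j) (fun x => hα.1 j x) hB.1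
    exact ⟨π, h1, h2, B, hB, h3⟩
  choose τ hτ using hne
  set σ : ∀ j, C j → ℝ := Function.update τ i σᵢ with hσdef
  have hσ : ∀ j, σ j ∈ ReducedSet (α j) := by
    intro j
    rcases eq_or_ne j i with rfl | hji
    · rw [hσdef, Function.update_self]
      exact hσᵢ
    · rw [hσdef, Function.update_of_ne hji]
      exact hτ j
  have hsupppt : ∀ j, ∃ x, τ j x ≠ 0 := by
    intro j
    by_contra hno
    push_neg at hno
    have h1 := (hτ j).1.2
    rw [Finset.sum_eq_zero (fun x _ => hno x)] at h1
    norm_num at h1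
  choose pt hpt using hsupppt
  set c : ∀ j, C j := Function.update pt i cᵢ with hcdef
  have hc0 : ∀ μ, IsCorrelatedEq U μ → μ c = 0 := by
    intro μ hμ
    have hmarg := hm μ hμ
    unfold marginal at hmarg
    have hnn : ∀ a : ∀ j, C j, 0 ≤ (if a i = cᵢ then μ a else 0) := by
      intro a
      by_cases hai : a i = cᵢ
      · rw [if_pos hai]; exact hμ.1 a
      · rw [if_neg hai]
    have hterm := (Finset.sum_eq_zero_iff_of_nonneg
      (fun a _ => hnn a)).mp hmarg c (Finset.mem_univ c)
    have hcic : c i = cᵢ := by rw [hcdef, Function.update_self]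
    rw [if_pos hcic] at hterm
    exact hterm
  have hprodz := part1 c hc0 σ hσ
  obtain ⟨j, _, hj⟩ := Finset.prod_eq_zero_iff.mp hprodz
  rcases eq_or_ne j i with rfl | hji
  · rw [hσdef, Function.update_self, hcdef, Function.update_self] at hj
    exact hj
  · exfalso
    rw [hσdef, Function.update_of_ne hji, hcdef, Function.update_of_ne hji] at hj
    exact hpt j hj
end

section
/- For every Nash equilibrium σ = (σ_1, σ_2) of a finite two-player zero-sum game Γ, there exists a dual vector α of Γ such that C_i/α_i = {σ_i} for each player i; i.e., there is a dual reduction of Γ whose set of strategy profiles is the singleton {σ}. -/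
open scoped BigOperators

section Bimatrix

variable {S T : Type} [Fintype S] [Fintype T] [DecidableEq S] [DecidableEq T]

/-- `D(c, α)` for the two-player zero-sum game with payoff `u` to player 1 (and `-u`
to player 2), at the pure strategy profile `(s, t)`. -/
def devGain2 (u : S → T → ℝ) (α₁ : S → S → ℝ) (α₂ : T → T → ℝ) (s : S) (t : T) : ℝ :=
  ((∑ s', α₁ s s' * u s' t) - u s t) + ((∑ t', α₂ t t' * (-(u s t'))) - (-(u s t)))

/-- A dual vector of the two-player zero-sum game with payoff `u` to player 1. -/
def IsDualVector2 (u : S → T → ℝ) (α₁ : S → S → ℝ) (α₂ : T → T → ℝ) : Prop :=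
  (∀ s, IsMixed (α₁ s)) ∧ (∀ t, IsMixed (α₂ t)) ∧ ∀ s t, 0 ≤ devGain2 u α₁ α₂ s t

/-- Correlated equilibrium of the two-player zero-sum game with payoff `u` to player 1. -/
def IsCorrelatedEq2 (u : S → T → ℝ) (μ : S → T → ℝ) : Prop :=
  (∀ s t, 0 ≤ μ s t) ∧ (∑ s, ∑ t, μ s t) = 1 ∧
  (∀ s s' : S, ∑ t, μ s t * (u s' t - u s t) ≤ 0) ∧
  (∀ t t' : T, ∑ s, μ s t * ((-(u s t')) - (-(u s t))) ≤ 0)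

/-- A full dual vector of the two-player zero-sum game with payoff `u` to player 1. -/
def IsFull2 (u : S → T → ℝ) (α₁ : S → S → ℝ) (α₂ : T → T → ℝ) : Prop :=
  (∀ s s', (∃ (β₁ : S → S → ℝ) (β₂ : T → T → ℝ),
      IsDualVector2 u β₁ β₂ ∧ 0 < β₁ s s') → 0 < α₁ s s') ∧
  (∀ t t', (∃ (β₁ : S → S → ℝ) (β₂ : T → T → ℝ),
      IsDualVector2 u β₁ β₂ ∧ 0 < β₂ t t') → 0 < α₂ t t')

end Bimatrix

lemma reducedSet_const {S : Type} [Fintype S] [DecidableEq S]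
    (σ : S → ℝ) (h : IsMixed σ) :
    ReducedSet (fun _ => σ) = {σ} := by
  ext τ
  constructor
  · rintro ⟨hτ, hst, -⟩
    have : devImage (fun _ => σ) τ = σ := by
      funext d
      simp only [devImage, ← Finset.sum_mul, hτ.2, one_mul]
    simp only [Set.mem_singleton_iff]
    rw [← hst, this]
  · rintro rfl
    refine ⟨h, ?_, ?_⟩
    · funext d
      simp only [devImage, ← Finset.sum_mul, h.2, one_mul]
    · refine ⟨Finset.univ.filter (fun s => τ s ≠ 0), ⟨⟨?_, ?_⟩, ?_⟩, ?_⟩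
      · obtain ⟨s, hs⟩ : ∃ s, τ s ≠ 0 := by
          by_contra hcon
          push_neg at hcon
          have := h.2
          simp [hcon] at this
        exact ⟨s, by simp [hs]⟩
      · intro c hc d hd
        simp [ne_of_gt hd]
      · intro B' hB' ⟨⟨c, hc⟩, habs⟩
        apply Finset.Subset.antisymm hB'
        intro d hd
        simp only [Finset.mem_filter, Finset.mem_univ, true_and] at hd
        exact habs c hc d (lt_of_le_of_ne (h.1 d) (Ne.symm hd))
      · intro s hs; simp [hs]

/-- For every Nash equilibrium `(σ₁, σ₂)` of a finite two-player zero-sum game, there is a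
dual vector whose reduced strategy sets are the singletons `{σ₁}` and `{σ₂}`. -/
theorem zero_sum_reduction_to_nash
    {S T : Type} [Fintype S] [Fintype T] [DecidableEq S] [DecidableEq T]
    [Nonempty S] [Nonempty T]
    (u : S → T → ℝ) (σ₁ : S → ℝ) (σ₂ : T → ℝ)
    (h₁ : IsMixed σ₁) (h₂ : IsMixed σ₂)
    (hNash₁ : ∀ s : S, ∑ t, σ₂ t * u s t ≤ ∑ s', ∑ t, σ₁ s' * σ₂ t * u s' t)
    (hNash₂ : ∀ t : T, ∑ s, ∑ t', σ₁ s * σ₂ t' * u s t' ≤ ∑ s, σ₁ s * u s t) :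
    ∃ (α₁ : S → S → ℝ) (α₂ : T → T → ℝ), IsDualVector2 u α₁ α₂ ∧
      ReducedSet α₁ = {σ₁} ∧ ReducedSet α₂ = {σ₂} := by
  refine ⟨fun _ => σ₁, fun _ => σ₂, ⟨fun _ => h₁, fun _ => h₂, ?_⟩,
    reducedSet_const σ₁ h₁, reducedSet_const σ₂ h₂⟩
  intro s t
  have hgain : devGain2 u (fun _ => σ₁) (fun _ => σ₂) s t
      = (∑ s', σ₁ s' * u s' t) - ∑ t', σ₂ t' * u s t' := by
    simp only [devGain2, mul_neg, Finset.sum_neg_distrib]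
    ring
  have hA := hNash₁ s
  have hB := hNash₂ t
  rw [hgain]
  linarith
end
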